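/- Let x = Γg be a point of X = Γ\G with G = PGL₂(ℝ) × ∏_{p∈S} PGL₂(ℚ_p) and Γ = PGL₂(ℤ[1/p : p ∈ S]) embedded diagonally, and let A_∞ be the real diagonal one-parameter subgroup. Suppose the orbit of a point y ∈ X under A_∞ satisfies y·a(t₀) = y·(e, h₀) for some t₀ > 0 and h₀ in the finite part (i.e., the A_∞-orbit of the real projection is a closed loop of length t₀ with holonomy h₀). Then the closure of y·A_∞ equals y·(A_∞ × H), where H is the closure of the cyclic group generated by h₀ in ∏_{p∈S} PGL₂(ℚ_p), and this orbit closure is compact. -/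

import Mathlib

/-- Let a topological group `G` act continuously on a Hausdorff space `X`
(abstracting `X = Γ\(PGL₂(ℝ) × ∏_{p∈S} PGL₂(ℚ_p))`), let `a : ℝ → G` be a continuous
one-parameter subgroup (the real diagonal flow `A_∞`), and let `h₀ ∈ G` commute with the
flow (the finite-part holonomy).  If `y` satisfies `y·a(t₀) = y·h₀` for some `t₀ > 0`, and
the closure `H` of the cyclic group generated by `h₀` is compact, then the closure of the
`A_∞`-orbit of `y` equals `y·(A_∞ × H) = {y·(a(t)h) : t ∈ ℝ, h ∈ H}`, and this orbit
closure is compact. -/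
theorem stmt_14 {G X : Type*} [Group G] [TopologicalSpace G] [IsTopologicalGroup G]
    [TopologicalSpace X] [T2Space X] [MulAction G X] [ContinuousSMul G X]
    (a : ℝ → G) (ha : ∀ s t : ℝ, a (s + t) = a s * a t) (hacont : Continuous a)
    (h₀ : G) (hcomm : ∀ t : ℝ, Commute h₀ (a t))
    (y : X) (t₀ : ℝ) (ht₀ : 0 < t₀)
    (hret : a t₀ • y = h₀ • y)
    (hH : IsCompact (((Subgroup.zpowers h₀).topologicalClosure : Subgroup G) : Set G)) :
    closure {x : X | ∃ t : ℝ, x = a t • y}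
      = {x : X | ∃ t : ℝ, ∃ h ∈ (Subgroup.zpowers h₀).topologicalClosure, x = (a t * h) • y}
    ∧ IsCompact
        {x : X | ∃ t : ℝ, ∃ h ∈ (Subgroup.zpowers h₀).topologicalClosure, x = (a t * h) • y} := by
  have ha0 : a 0 = 1 := by
    have h := ha 0 0
    rw [add_zero] at h
    exact left_eq_mul.mp h
  have hainv : ∀ t : ℝ, a (-t) = (a t)⁻¹ := by
    intro t
    refine eq_inv_of_mul_eq_one_right ?_
    rw [← ha]; simp [ha0]
  have ha_int : ∀ n : ℤ, a (n * t₀) = (a t₀) ^ n := by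
    intro n
    induction n using Int.induction_on with
    | zero => simpa using ha0
    | succ k ih =>
        rw [show (((k : ℤ) + 1 : ℤ) : ℝ) * t₀ = ((k : ℤ) : ℝ) * t₀ + t₀ by push_cast; ring,
          ha, ih, zpow_add_one]
    | pred k ih =>
        rw [show ((-(k : ℤ) - 1 : ℤ) : ℝ) * t₀ = ((-(k : ℤ) : ℤ) : ℝ) * t₀ + -t₀ by
            push_cast; ring,
          ha, ih, hainv, zpow_sub_one]
  have hinv : (a t₀)⁻¹ • y = h₀⁻¹ • y := by
    have h1 : (h₀⁻¹ * a t₀) • y = y := by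
      rw [mul_smul, hret, inv_smul_smul]
    have h2 : a t₀ • (h₀⁻¹ • y) = y := by
      rw [← mul_smul, ← ((hcomm t₀).inv_left).eq, h1]
    calc (a t₀)⁻¹ • y = (a t₀)⁻¹ • a t₀ • (h₀⁻¹ • y) := by rw [h2]
      _ = h₀⁻¹ • y := inv_smul_smul _ _
  have hpow : ∀ n : ℤ, (a t₀) ^ n • y = h₀ ^ n • y := by
    intro n
    induction n using Int.induction_on with
    | zero => simp
    | succ k ih =>
        show a t₀ ^ ((k : ℤ) + 1) • y = h₀ ^ ((k : ℤ) + 1) • y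
        rw [zpow_add_one, zpow_add_one, mul_smul, hret, ← mul_smul,
          ← ((hcomm t₀).zpow_right (k : ℤ)).eq, mul_smul, ih, ← mul_smul]
        congr 1
        exact ((Commute.refl h₀).zpow_right (k : ℤ)).eq
    | pred k ih =>
        show a t₀ ^ (-(k : ℤ) - 1) • y = h₀ ^ (-(k : ℤ) - 1) • y
        rw [zpow_sub_one, zpow_sub_one, mul_smul, hinv, ← mul_smul,
          ← ((hcomm t₀).inv_left.zpow_right (-(k : ℤ))).eq, mul_smul, ih, ← mul_smul]
        congr 1
        exact ((Commute.refl h₀).inv_left.zpow_right (-(k : ℤ))).eq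
  set K := (Subgroup.zpowers h₀).topologicalClosure with hKdef
  have hKset : (K : Set G) = closure ((Subgroup.zpowers h₀ : Subgroup G) : Set G) := rfl
  set S1 : Set X := {x : X | ∃ t : ℝ, x = a t • y} with hS1
  set S2 : Set X := {x : X | ∃ t : ℝ, ∃ h ∈ K, x = (a t * h) • y} with hS2
  have hc1 : ∀ t : ℝ, Continuous fun g : G => (a t * g) • y := fun t =>
    (continuous_const.mul continuous_id).smul continuous_const
  -- elements of K commute with the flow, at least on y
  have hcommK : ∀ t : ℝ, ∀ h ∈ K, (a t * h) • y = (h * a t) • y := by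
    intro t
    have heq : Set.EqOn (fun g : G => (a t * g) • y) (fun g : G => (g * a t) • y)
        ((Subgroup.zpowers h₀ : Subgroup G) : Set G) := by
      rintro g hg
      obtain ⟨n, rfl⟩ := Subgroup.mem_zpowers_iff.mp hg
      simp only
      rw [((hcomm t).zpow_left n).eq]
    have hc2 : Continuous fun g : G => (g * a t) • y :=
      (continuous_id.mul continuous_const).smul continuous_const
    intro h hh
    have hh' : h ∈ closure ((Subgroup.zpowers h₀ : Subgroup G) : Set G) := hh
    exact heq.closure (hc1 t) hc2 hh'
  -- (A) : S2 is contained in the closure of S1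
  have hA : S2 ⊆ closure S1 := by
    rintro x ⟨t, h, hh, rfl⟩
    have hmaps : Set.MapsTo (fun g : G => (a t * g) • y)
        ((Subgroup.zpowers h₀ : Subgroup G) : Set G) S1 := by
      rintro g hg
      obtain ⟨n, rfl⟩ := Subgroup.mem_zpowers_iff.mp hg
      exact ⟨t + n * t₀, by rw [ha, ha_int, mul_smul, hpow, ← mul_smul]⟩
    have hh' : h ∈ closure ((Subgroup.zpowers h₀ : Subgroup G) : Set G) := hh
    exact map_mem_closure (f := fun g : G => (a t * g) • y) (hc1 t) hh' hmaps
  -- (C) : S2 is the continuous image of a compact set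
  have himg : S2 = (fun p : ℝ × G => (a p.1 * p.2) • y) '' (Set.Icc 0 t₀ ×ˢ (K : Set G)) := by
    ext x
    constructor
    · rintro ⟨t, h, hh, rfl⟩
      set n : ℤ := ⌊t / t₀⌋ with hn
      have h1 : (n : ℝ) * t₀ ≤ t := (le_div_iff₀ ht₀).mp (Int.floor_le _)
      have h2 : t - (n : ℝ) * t₀ ≤ t₀ := by
        have h3 := (div_lt_iff₀ ht₀).mp (Int.lt_floor_add_one (t / t₀))
        nlinarith
      refine ⟨(t - (n : ℝ) * t₀, h * h₀ ^ n),
        ⟨⟨sub_nonneg.mpr h1, h2⟩,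
          mul_mem hh (Subgroup.le_topologicalClosure _
            (Subgroup.zpow_mem _ (Subgroup.mem_zpowers h₀) n))⟩, ?_⟩
      show (a (t - (n : ℝ) * t₀) * (h * h₀ ^ n)) • y = (a t * h) • y
      symm
      calc (a t * h) • y = (a ((t - (n : ℝ) * t₀) + (n : ℝ) * t₀) * h) • y := by
            rw [sub_add_cancel]
        _ = (a (t - (n : ℝ) * t₀) * (a ((n : ℝ) * t₀) * h)) • y := by rw [ha, mul_assoc]
        _ = a (t - (n : ℝ) * t₀) • ((a ((n : ℝ) * t₀) * h) • y) := by rw [mul_smul]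
        _ = a (t - (n : ℝ) * t₀) • ((h * a ((n : ℝ) * t₀)) • y) := by
            rw [hcommK ((n : ℝ) * t₀) h hh]
        _ = a (t - (n : ℝ) * t₀) • (h • (h₀ ^ n • y)) := by
            rw [mul_smul, ha_int, hpow]
        _ = (a (t - (n : ℝ) * t₀) * (h * h₀ ^ n)) • y := by rw [mul_smul, mul_smul]
    · rintro ⟨⟨s, h⟩, ⟨_, hh⟩, rfl⟩
      exact ⟨s, h, hh, rfl⟩
  have hcompact : IsCompact S2 := by
    rw [himg]
    exact (isCompact_Icc.prod hH).image
      (((hacont.comp continuous_fst).mul continuous_snd).smul continuous_const)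
  have hB : S1 ⊆ S2 := by
    rintro x ⟨t, rfl⟩
    exact ⟨t, 1, one_mem _, by rw [mul_one]⟩
  exact ⟨subset_antisymm (closure_minimal hB hcompact.isClosed) hA, hcompact⟩
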